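/- Let a_m = u^{τ₂(m-1)} with u an indeterminate, and let H(n,l) = (a_{n+i+j})_{0≤i,j≤l}. If both n and l are even (n ≥ 2), then |det H(n,l)| = |u| · |det H(n/2, l/2)| · |det H̃(n/2 + 1, l/2 - 1)|, where H̃(m,k) := (a_{m+1+i+j} - u²·a_{m+i+j})_{0≤i,j≤k}. -/
import Mathlib


open Polynomial

/-- binary digit sum -/
def tau2 (n : ℕ) : ℕ := (Nat.digits 2 n).sum

/-- the `k × k` Hankel matrix `H(n, k-1)` with entries `a_{n+i+j} = u^{τ₂(n+i+j-1)}` -/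
noncomputable def hank (n k : ℕ) : Matrix (Fin k) (Fin k) (Polynomial ℚ) :=
  fun i j => X ^ tau2 (n + i + j - 1)

/-- the `k × k` matrix `H̃(m, k-1)` with entries `a_{m+1+i+j} - u²·a_{m+i+j}` -/
noncomputable def hankT (m k : ℕ) : Matrix (Fin k) (Fin k) (Polynomial ℚ) :=
  fun i j => X ^ tau2 (m + 1 + i + j - 1) - X ^ 2 * X ^ tau2 (m + i + j - 1)

open Polynomial Matrix Equiv

lemma tau2_two_mul (k : ℕ) : tau2 (2 * k) = tau2 k := by
  rcases Nat.eq_zero_or_pos k with h | h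
  · simp [h, tau2]
  · unfold tau2
    rw [Nat.digits_def' (by norm_num : (1:ℕ) < 2) (by omega)]
    simp [Nat.mul_div_cancel_left, Nat.mul_mod_right]

lemma tau2_two_mul_add_one (k : ℕ) : tau2 (2 * k + 1) = tau2 k + 1 := by
  unfold tau2
  rw [Nat.digits_def' (by norm_num : (1:ℕ) < 2) (by omega)]
  have h1 : (2 * k + 1) % 2 = 1 := by omega
  have h2 : (2 * k + 1) / 2 = k := by omega
  rw [h1, h2, List.sum_cons]
  omega

def ilFun (s : ℕ) : Fin (s+1) ⊕ Fin s → Fin (2*s+1)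
  | .inl p => ⟨2*(p:ℕ), by have := p.isLt; omega⟩
  | .inr p => ⟨2*(p:ℕ)+1, by have := p.isLt; omega⟩

/-- interleaving equivalence -/
def eIL (s : ℕ) : Fin (s+1) ⊕ Fin s ≃ Fin (2*s+1) where
  toFun := ilFun s
  invFun i := if h : (i : ℕ) % 2 = 0 then Sum.inl ⟨(i:ℕ)/2, by have := i.isLt; omega⟩
    else Sum.inr ⟨(i:ℕ)/2, by have := i.isLt; omega⟩
  left_inv x := by
    rcases x with p | p <;> dsimp only [ilFun]
    · rw [dif_pos (by omega)]
      simp only [Sum.inl.injEq]; exact Fin.ext (by simp only [Fin.val_mk]; omega)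
    · rw [dif_neg (by omega)]
      simp only [Sum.inr.injEq]; exact Fin.ext (by simp only [Fin.val_mk]; omega)
  right_inv i := by
    by_cases h : (i:ℕ) % 2 = 0 <;> dsimp only
    · rw [dif_pos h]; dsimp only [ilFun]; exact Fin.ext (by simp; omega)
    · rw [dif_neg h]; dsimp only [ilFun]
      exact Fin.ext (by simp; have := i.isLt; omega)

lemma eIL_inl (s : ℕ) (p : Fin (s+1)) : ((eIL s (.inl p)) : ℕ) = 2*(p:ℕ) := rfl
lemma eIL_inr (s : ℕ) (p : Fin s) : ((eIL s (.inr p)) : ℕ) = 2*(p:ℕ)+1 := rfl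

def swapFun (s : ℕ) : Fin (s+1) ⊕ Fin s → Fin (s+1) ⊕ Fin s
  | .inl i => if h : (i:ℕ) = 0 then .inl ⟨0, by omega⟩ else .inr ⟨(i:ℕ)-1, by have := i.isLt; omega⟩
  | .inr p => .inl ⟨(p:ℕ)+1, by have := p.isLt; omega⟩

lemma swapFun_inl (s : ℕ) (i : Fin (s+1)) : swapFun s (.inl i) =
    if h : (i:ℕ) = 0 then .inl ⟨0, by omega⟩ else .inr ⟨(i:ℕ)-1, by have := i.isLt; omega⟩ := rfl

lemma swapFun_inr (s : ℕ) (p : Fin s) :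
    swapFun s (.inr p) = .inl ⟨(p:ℕ)+1, by have := p.isLt; omega⟩ := rfl

lemma swapFun_inv (s : ℕ) : Function.Involutive (swapFun s) := by
  rintro (i | p)
  · by_cases h : (i:ℕ) = 0
    · rw [swapFun_inl, dif_pos h, swapFun_inl, dif_pos rfl]
      simp only [Sum.inl.injEq]; exact Fin.ext h.symm
    · rw [swapFun_inl, dif_neg h, swapFun_inr]
      simp only [Sum.inl.injEq]; exact Fin.ext (by simp only [Fin.val_mk]; omega)
  · rw [swapFun_inr, swapFun_inl, dif_neg (by simp only [Fin.val_mk]; omega)]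
    simp only [Sum.inr.injEq]; exact Fin.ext (by simp only [Fin.val_mk]; omega)

def σp (s : ℕ) : Equiv.Perm (Fin (s+1) ⊕ Fin s) := (swapFun_inv s).toPerm _

lemma σp_apply (s : ℕ) (x) : σp s x = swapFun s x := rfl

noncomputable section
namespace HankelAux
open Matrix

def Amat (m s : ℕ) : Matrix (Fin (s+1)) (Fin (s+1)) (Polynomial ℚ) :=
  fun p q => X * X ^ tau2 (m + p + q - 1)
def Bmat (m s : ℕ) : Matrix (Fin (s+1)) (Fin s) (Polynomial ℚ) :=
  fun p q => X ^ tau2 (m + p + q)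
def Cmat (m s : ℕ) : Matrix (Fin s) (Fin (s+1)) (Polynomial ℚ) :=
  fun p q => X ^ tau2 (m + p + q)
def Dmat (m s : ℕ) : Matrix (Fin s) (Fin s) (Polynomial ℚ) :=
  fun p q => X * X ^ tau2 (m + p + q)
def Fmat (m s : ℕ) : Matrix (Fin (s+1)) (Fin s) (Polynomial ℚ) :=
  fun p r => if (p:ℕ) = (r:ℕ)+1 then -X else 0
def A'mat (m s : ℕ) : Matrix (Fin (s+1)) (Fin (s+1)) (Polynomial ℚ) :=
  fun p q => if (p:ℕ) = 0 then X * X ^ tau2 (m + q - 1) else 0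
def B'mat (m s : ℕ) : Matrix (Fin (s+1)) (Fin s) (Polynomial ℚ) :=
  fun p q => if (p:ℕ) = 0 then X ^ tau2 (m + q)
    else X ^ tau2 (m + p + q) - X^2 * X ^ tau2 (m + p + q - 1)
def Gmat (m s : ℕ) : Matrix (Fin (s+1)) (Fin (s+1)) (Polynomial ℚ) :=
  (hank m (s+1)).updateRow 0 ((X : ℚ[X]) • hank m (s+1) 0)
def Hdmat (m s : ℕ) : Matrix (Fin (s+1)) (Fin s) (Polynomial ℚ) :=
  fun p q => if (p:ℕ) = 0 then X ^ tau2 (m + q) else X * X ^ tau2 (m + p + q - 1)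

lemma hM (m s : ℕ) (hm : 1 ≤ m) :
    (hank (2*m) (2*s+1)).submatrix (eIL s) (eIL s)
      = fromBlocks (Amat m s) (Bmat m s) (Cmat m s) (Dmat m s) := by
  refine Matrix.ext fun i j => ?_
  rcases i with p | p <;> rcases j with q | q <;>
    simp only [submatrix_apply, fromBlocks_apply₁₁, fromBlocks_apply₁₂,
      fromBlocks_apply₂₁, fromBlocks_apply₂₂, hank, Amat, Bmat, Cmat, Dmat, eIL_inl, eIL_inr]
  · rw [show 2*m + 2*(p:ℕ) + 2*(q:ℕ) - 1 = 2*(m+(p:ℕ)+(q:ℕ)-1)+1 from by omega,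
      tau2_two_mul_add_one, pow_succ]
    ring
  · rw [show 2*m + 2*(p:ℕ) + (2*(q:ℕ)+1) - 1 = 2*(m+(p:ℕ)+(q:ℕ)) from by omega, tau2_two_mul]
  · rw [show 2*m + (2*(p:ℕ)+1) + 2*(q:ℕ) - 1 = 2*(m+(p:ℕ)+(q:ℕ)) from by omega, tau2_two_mul]
  · rw [show 2*m + (2*(p:ℕ)+1) + (2*(q:ℕ)+1) - 1 = 2*(m+(p:ℕ)+(q:ℕ))+1 from by omega,
      tau2_two_mul_add_one, pow_succ]
    ring

lemma hE (m s : ℕ) (hm : 1 ≤ m) :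
    fromBlocks 1 (Fmat m s) 0 1 * fromBlocks (Amat m s) (Bmat m s) (Cmat m s) (Dmat m s)
      = fromBlocks (A'mat m s) (B'mat m s) (Cmat m s) (Dmat m s) := by
  have h11 : Amat m s + Fmat m s * Cmat m s = A'mat m s := by
    ext p q
    rw [Matrix.add_apply, Matrix.mul_apply]
    induction p using Fin.cases with
    | zero =>
      have : ∀ r : Fin s, Fmat m s 0 r * Cmat m s r q = 0 := by
        intro r; rw [show Fmat m s 0 r = 0 from if_neg (by simp), zero_mul]
      rw [Finset.sum_congr rfl (fun r _ => this r)]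
      simp [Amat, A'mat]
    | succ p' =>
      rw [Finset.sum_eq_single p' (fun b _ hb => by
          rw [show Fmat m s p'.succ b = 0 from if_neg (by
            simp only [Fin.val_succ]
            intro hc
            exact hb (Fin.ext (by omega)).symm), zero_mul])
        (fun h => absurd (Finset.mem_univ p') h)]
      rw [show Fmat m s p'.succ p' = -X from if_pos (by simp [Fin.val_succ])]
      simp only [Amat, Cmat, A'mat, Fin.val_succ]
      rw [if_neg (by omega),
        show m + ((p':ℕ)+1) + (q:ℕ) - 1 = m + (p':ℕ) + (q:ℕ) from by omega]
      ring
  have h12 : Bmat m s + Fmat m s * Dmat m s = B'mat m s := by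
    ext p q
    rw [Matrix.add_apply, Matrix.mul_apply]
    induction p using Fin.cases with
    | zero =>
      have : ∀ r : Fin s, Fmat m s 0 r * Dmat m s r q = 0 := by
        intro r; rw [show Fmat m s 0 r = 0 from if_neg (by simp), zero_mul]
      rw [Finset.sum_congr rfl (fun r _ => this r)]
      simp [Bmat, B'mat]
    | succ p' =>
      rw [Finset.sum_eq_single p' (fun b _ hb => by
          rw [show Fmat m s p'.succ b = 0 from if_neg (by
            simp only [Fin.val_succ]
            intro hc
            exact hb (Fin.ext (by omega)).symm), zero_mul])
        (fun h => absurd (Finset.mem_univ p') h)]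
      rw [show Fmat m s p'.succ p' = -X from if_pos (by simp [Fin.val_succ])]
      simp only [Bmat, Dmat, B'mat, Fin.val_succ]
      rw [if_neg (by omega),
        show m + ((p':ℕ)+1) + (q:ℕ) - 1 = m + (p':ℕ) + (q:ℕ) from by omega]
      ring
  rw [Matrix.fromBlocks_multiply]
  rw [Matrix.one_mul, Matrix.one_mul, Matrix.one_mul, Matrix.zero_mul, Matrix.zero_mul,
    Matrix.one_mul]
  rw [h11, h12]
  congr 1 <;> simp

lemma hperm (m s : ℕ) (hm : 1 ≤ m) :
    (fromBlocks (A'mat m s) (B'mat m s) (Cmat m s) (Dmat m s)).submatrix (σp s) id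
      = fromBlocks (Gmat m s) (Hdmat m s) 0 (hankT (m+1) s) := by
  refine Matrix.ext fun i j => ?_
  rcases i with p | p
  · induction p using Fin.cases with
    | zero =>
      have hσ : σp s (.inl (0 : Fin (s+1))) = .inl (0 : Fin (s+1)) := by
        rw [σp_apply, swapFun_inl, dif_pos (by simp)]
        exact congrArg Sum.inl (Fin.ext (by simp))
      rcases j with q | q <;>
        simp only [submatrix_apply, id_eq, hσ, fromBlocks_apply₁₁, fromBlocks_apply₁₂]
      · rw [show A'mat m s 0 q = X * X ^ tau2 (m + q - 1) from if_pos (by simp)]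
        show _ = Gmat m s 0 q
        simp only [Gmat, Matrix.updateRow_self, Pi.smul_apply, smul_eq_mul, hank]
        rw [show m + ((0:Fin (s+1)):ℕ) + (q:ℕ) - 1 = m + (q:ℕ) - 1 from by simp]
      · rw [show B'mat m s 0 q = X ^ tau2 (m + q) from if_pos (by simp)]
        show _ = Hdmat m s 0 q
        rw [show Hdmat m s 0 q = X ^ tau2 (m + q) from if_pos (by simp)]
    | succ p' =>
      have hσ : σp s (.inl p'.succ) = .inr p' := by
        rw [σp_apply, swapFun_inl, dif_neg (by simp)]
        exact congrArg Sum.inr (Fin.ext (by simp))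
      rcases j with q | q <;>
        simp only [submatrix_apply, id_eq, hσ, fromBlocks_apply₂₁, fromBlocks_apply₂₂,
          fromBlocks_apply₁₁, fromBlocks_apply₁₂]
      · show Cmat m s p' q = Gmat m s p'.succ q
        simp only [Gmat, Cmat]
        rw [Matrix.updateRow_ne (Fin.succ_ne_zero p')]
        simp only [hank, Fin.val_succ]
        rw [show m + ((p':ℕ)+1) + (q:ℕ) - 1 = m + (p':ℕ) + (q:ℕ) from by omega]
      · show Dmat m s p' q = Hdmat m s p'.succ q
        simp only [Dmat, Hdmat, Fin.val_succ]
        rw [if_neg (by omega),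
          show m + ((p':ℕ)+1) + (q:ℕ) - 1 = m + (p':ℕ) + (q:ℕ) from by omega]
  · have hσ : σp s (.inr p) = .inl ⟨(p:ℕ)+1, by have := p.isLt; omega⟩ := by
      rw [σp_apply, swapFun_inr]
    rcases j with q | q <;>
      simp only [submatrix_apply, id_eq, hσ, fromBlocks_apply₁₁, fromBlocks_apply₁₂,
        fromBlocks_apply₂₁, fromBlocks_apply₂₂]
    · show A'mat m s _ q = (0 : Matrix (Fin s) (Fin (s+1)) (Polynomial ℚ)) p q
      rw [show A'mat m s ⟨(p:ℕ)+1, by have := p.isLt; omega⟩ q = 0 from if_neg (by simp)]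
      simp
    · show B'mat m s _ q = hankT (m+1) s p q
      simp only [B'mat, hankT, Fin.val_mk]
      rw [if_neg (by omega),
        show m + ((p:ℕ)+1) + (q:ℕ) = m + 1 + 1 + (p:ℕ) + (q:ℕ) - 1 from by omega,
        show m + 1 + 1 + (p:ℕ) + (q:ℕ) - 1 - 1 = m + 1 + (p:ℕ) + (q:ℕ) - 1 from by omega]

theorem key (m s : ℕ) (hm : 1 ≤ m) :
    (hank (2*m) (2*s+1)).det = X * (hank m (s+1)).det * (hankT (m+1) s).det ∨
    (hank (2*m) (2*s+1)).det = -(X * (hank m (s+1)).det * (hankT (m+1) s).det) := by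
  have h1 : (hank (2*m) (2*s+1)).det
      = (fromBlocks (Amat m s) (Bmat m s) (Cmat m s) (Dmat m s)).det := by
    rw [← hM m s hm, Matrix.det_submatrix_equiv_self]
  have h2 : (fromBlocks (Amat m s) (Bmat m s) (Cmat m s) (Dmat m s)).det
      = (fromBlocks (A'mat m s) (B'mat m s) (Cmat m s) (Dmat m s)).det := by
    rw [← hE m s hm, Matrix.det_mul, Matrix.det_fromBlocks_zero₂₁]
    simp
  have h3 := Matrix.det_permute (σp s) (fromBlocks (A'mat m s) (B'mat m s) (Cmat m s) (Dmat m s))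
  rw [hperm m s hm, Matrix.det_fromBlocks_zero₂₁] at h3
  have hG : (Gmat m s).det = X * (hank m (s+1)).det := by
    rw [Gmat, Matrix.det_updateRow_smul, Matrix.updateRow_eq_self]
  rw [hG] at h3
  rcases Int.units_eq_one_or (Equiv.Perm.sign (σp s)) with hs | hs <;> rw [hs] at h3
  · left
    rw [h1, h2]
    simp only [Units.val_one, Int.cast_one, one_mul] at h3
    rw [← h3]
  · right
    rw [h1, h2]
    simp only [Units.val_neg, Units.val_one, Int.cast_neg, Int.cast_one, neg_mul, one_mul] at h3
    linear_combination h3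

end HankelAux
end


/-- If both `n ≥ 2` and `l` are even, then up to sign
`det H(n,l) = u · det H(n/2, l/2) · det H̃(n/2+1, l/2-1)`
(the last matrix having size `l/2`). -/
theorem hankel_det_factorization_even (n l : ℕ) (hn : 2 ≤ n)
    (hne : Even n) (hle : Even l) :
    (hank n (l + 1)).det =
        X * (hank (n / 2) (l / 2 + 1)).det * (hankT (n / 2 + 1) (l / 2)).det ∨
    (hank n (l + 1)).det =
        -(X * (hank (n / 2) (l / 2 + 1)).det * (hankT (n / 2 + 1) (l / 2)).det) := by
  obtain ⟨m, rfl⟩ := hne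
  obtain ⟨s, rfl⟩ := hle
  have hm : 1 ≤ m := by omega
  rw [show (m + m) / 2 = m from by omega, show (s + s) / 2 = s from by omega,
    show m + m = 2 * m from by ring, show s + s + 1 = 2 * s + 1 from by ring]
  exact HankelAux.key m s hm
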